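/- Substitution Lemma for the CbV Taylor expansion: for a λ-term M, a value V, and a variable x, 𝒯(M[x := V]) equals the union, over t ∈ 𝒯(M) and [v₁,…,v_n] ∈ 𝒯(V), of the linear substitutions t⟨x := v₁,…,v_n⟩. -/

import Mathlib

/-- λ-terms possibly containing the constant ⊥ (Λ⊥). Pure λ-terms are those
satisfying `NoBot`. Variables are natural numbers. -/
inductive Tm : Type
  | var : ℕ → Tm
  | lam : ℕ → Tm → Tm
  | app : Tm → Tm → Tm
  | bot : Tm
deriving DecidableEq

namespace Tm

/-- Values of Λ⊥: ⊥, variables and abstractions. -/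
def IsVal : Tm → Prop
  | var _ => True
  | lam _ _ => True
  | bot => True
  | app _ _ => False

/-- A term is a pure λ-term when it contains no occurrence of ⊥. -/
def NoBot : Tm → Prop
  | var _ => True
  | lam _ M => NoBot M
  | app M N => NoBot M ∧ NoBot N
  | bot => False

/-- `FV x M` : the variable `x` occurs free in `M`. -/
inductive FV : ℕ → Tm → Prop
  | var : ∀ x, FV x (var x)
  | lam : ∀ {x y M}, x ≠ y → FV x M → FV x (lam y M)
  | appL : ∀ {x M N}, FV x M → FV x (app M N)
  | appR : ∀ {x M N}, FV x N → FV x (app M N)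

/-- Capture-avoiding substitution `M[x := N]` (bound variables are assumed to
be suitably renamed, so we substitute naively under binders `≠ x`). -/
def subst : Tm → ℕ → Tm → Tm
  | var y, x, N => if y = x then N else var y
  | lam y P, x, N => if y = x then lam y P else lam y (subst P x N)
  | app P Q, x, N => app (subst P x N) (subst Q x N)
  | bot, _, _ => bot

/-- The v-reduction: contextual closure of the rules β_v, σ₁ and σ₃. -/
inductive Step : Tm → Tm → Prop
  | beta : ∀ {x M V}, IsVal V → Step (app (lam x M) V) (subst M x V)
  | sigma1 : ∀ {x M N P}, ¬ FV x P →
      Step (app (app (lam x M) N) P) (app (lam x (app M P)) N)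
  | sigma3 : ∀ {x V M N}, IsVal V → ¬ FV x V →
      Step (app V (app (lam x M) N)) (app (lam x (app V M)) N)
  | appL : ∀ {M M' N}, Step M M' → Step (app M N) (app M' N)
  | appR : ∀ {M N N'}, Step N N' → Step (app M N) (app M N')
  | lam : ∀ {x M M'}, Step M M' → Step (lam x M) (lam x M')

/-- The σ-reduction: contextual closure of the rules σ₁ and σ₃ only. -/
inductive SStep : Tm → Tm → Prop
  | sigma1 : ∀ {x M N P}, ¬ FV x P →
      SStep (app (app (lam x M) N) P) (app (lam x (app M P)) N)
  | sigma3 : ∀ {x V M N}, IsVal V → ¬ FV x V →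
      SStep (app V (app (lam x M) N)) (app (lam x (app V M)) N)
  | appL : ∀ {M M' N}, SStep M M' → SStep (app M N) (app M' N)
  | appR : ∀ {M N N'}, SStep N N' → SStep (app M N) (app M N')
  | lam : ∀ {x M M'}, SStep M M' → SStep (lam x M) (lam x M')

/-- A term is in v-normal form when no v-reduction step applies. -/
def VNormal (M : Tm) : Prop := ∀ N, ¬ Step M N

mutual
  /-- Grammar of v-normal forms: general normal forms `G ::= H | R`. -/
  inductive IsG : Tm → Prop
    | ofH : ∀ {t}, IsH t → IsG t
    | ofR : ∀ {t}, IsR t → IsG t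
  /-- head normal forms `H ::= x | λx.G | x H G₁ ⋯ G_k`. -/
  inductive IsH : Tm → Prop
    | var : ∀ x, IsH (var x)
    | lam : ∀ {x t}, IsG t → IsH (lam x t)
    | spine : ∀ {t}, IsHSpine t → IsH t
  /-- terms of the shape `x H G₁ ⋯ G_k` (k ≥ 0). -/
  inductive IsHSpine : Tm → Prop
    | head : ∀ {x h}, IsH h → IsHSpine (app (var x) h)
    | app : ∀ {t g}, IsHSpine t → IsG g → IsHSpine (app t g)
  /-- redex-like normal forms `R ::= (λx.G)(y H G₁ ⋯ G_k)`. -/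
  inductive IsR : Tm → Prop
    | mk : ∀ {x t s}, IsG t → IsHSpine s → IsR (app (lam x t) s)
end

mutual
  /-- The set 𝒜 of approximants: `A ::= B | C`. -/
  inductive IsA : Tm → Prop
    | ofB : ∀ {t}, IsB t → IsA t
    | ofC : ∀ {t}, IsC t → IsA t
  /-- `B ::= x | λx.A | ⊥ | x B A₁ ⋯ A_k`. -/
  inductive IsB : Tm → Prop
    | var : ∀ x, IsB (var x)
    | lam : ∀ {x t}, IsA t → IsB (lam x t)
    | bot : IsB bot
    | spine : ∀ {t}, IsBSpine t → IsB t
  /-- terms of the shape `x B A₁ ⋯ A_k` (k ≥ 0). -/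
  inductive IsBSpine : Tm → Prop
    | head : ∀ {x b}, IsB b → IsBSpine (app (var x) b)
    | app : ∀ {t a}, IsBSpine t → IsA a → IsBSpine (app t a)
  /-- `C ::= (λx.A)(y B A₁ ⋯ A_k)`. -/
  inductive IsC : Tm → Prop
    | mk : ∀ {x t s}, IsA t → IsBSpine s → IsC (app (lam x t) s)
end

/-- The order ⊑ on Λ⊥: context-closed preorder generated by ⊥ ⊑ x, ⊥ ⊑ λx.M. -/
inductive LE : Tm → Tm → Prop
  | refl : ∀ t, LE t t
  | botVar : ∀ x, LE bot (var x)
  | botLam : ∀ x t, LE bot (lam x t)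
  | lam : ∀ {x s t}, LE s t → LE (lam x s) (lam x t)
  | app : ∀ {s₁ s₂ t₁ t₂}, LE s₁ t₁ → LE s₂ t₂ → LE (app s₁ s₂) (app t₁ t₂)

/-- The set of approximants of a term:
`𝒜(M) = { A ∈ 𝒜 | ∃ N, M →*_v N and A ⊑ N }`. -/
def ApproxOf (M : Tm) : Set Tm :=
  {A | IsA A ∧ ∃ N, Relation.ReflTransGen Step M N ∧ LE A N}

end Tm

/-- Single-hole (⊥-)contexts. -/
inductive Ctx : Type
  | hole : Ctx
  | appL : Ctx → Tm → Ctx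
  | appR : Tm → Ctx → Ctx
  | lam : ℕ → Ctx → Ctx

/-- Filling the hole of a context with a term (possibly capturing variables). -/
def Ctx.fill : Ctx → Tm → Tm
  | .hole, M => M
  | .appL C N, M => .app (C.fill M) N
  | .appR N C, M => .app N (C.fill M)
  | .lam x C, M => .lam x (C.fill M)

/-- Resource terms of the CbV resource calculus: resource values are
variables `var x` and abstractions `lam x t`; simple terms are applications
`app s t` and bags `bag [v₁,…,v_k]` (finite multisets of values, represented
as lists considered up to permutation by the rules below). -/
inductive RTm : Type
  | var : ℕ → RTm
  | lam : ℕ → RTm → RTm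
  | app : RTm → RTm → RTm
  | bag : List RTm → RTm

namespace RTm

/-- Resource values. -/
def IsRVal : RTm → Prop
  | var _ => True
  | lam _ _ => True
  | _ => False

/-- Simple terms (applications and bags). -/
def IsSimple : RTm → Prop
  | app _ _ => True
  | bag _ => True
  | _ => False

/-- Free-variable occurrence predicate for resource terms. -/
inductive RFV : ℕ → RTm → Prop
  | var : ∀ x, RFV x (var x)
  | lam : ∀ {x y t}, x ≠ y → RFV x t → RFV x (lam y t)
  | appL : ∀ {x s t}, RFV x s → RFV x (app s t)
  | appR : ∀ {x s t}, RFV x t → RFV x (app s t)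
  | bag : ∀ {x t ts}, t ∈ ts → RFV x t → RFV x (bag ts)

/-- Linear substitution: `LSubst e x vs e'` holds iff `e'` is one of the terms
obtained from `e` by substituting the values `vs` bijectively for the free
occurrences of `x` in `e` (no such `e'` exists if the count mismatches). -/
inductive LSubst : RTm → ℕ → List RTm → RTm → Prop
  | varEq : ∀ x v, LSubst (var x) x [v] v
  | varNe : ∀ {x y}, y ≠ x → LSubst (var y) x [] (var y)
  | lamEq : ∀ x t, LSubst (lam x t) x [] (lam x t)
  | lamNe : ∀ {x y t vs t'}, y ≠ x → LSubst t x vs t' →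
      LSubst (lam y t) x vs (lam y t')
  | app : ∀ {s t x us ws vs s' t'}, LSubst s x us s' → LSubst t x ws t' →
      vs.Perm (us ++ ws) → LSubst (app s t) x vs (app s' t')
  | bagNil : ∀ x, LSubst (bag []) x [] (bag [])
  | bagCons : ∀ {v ts x us ws vs v' ts'}, LSubst v x us v' →
      LSubst (bag ts) x ws (bag ts') → vs.Perm (us ++ ws) →
      LSubst (bag (v :: ts)) x vs (bag (v' :: ts'))

/-- One step of resource reduction at the level of terms, producing a
(finite) set of resource terms: rules β_r, 0, σ₁, σ₃, contextually closed. -/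
inductive RStep : RTm → Set RTm → Prop
  | beta : ∀ {x t vs}, (∀ v ∈ vs, IsRVal v) →
      RStep (app (bag [lam x t]) (bag vs)) {t' | LSubst t x vs t'}
  | zero : ∀ {vs t}, (∀ v ∈ vs, IsRVal v) → vs.length ≠ 1 →
      RStep (app (bag vs) t) ∅
  | sigma1 : ∀ {x t s₁ s₂}, ¬ RFV x s₁ →
      RStep (app (app (bag [lam x t]) s₁) s₂) {app (bag [lam x (app t s₂)]) s₁}
  | sigma3 : ∀ {v x t s}, IsRVal v → ¬ RFV x v →
      RStep (app (bag [v]) (app (bag [lam x t]) s))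
        {app (bag [lam x (app (bag [v]) t)]) s}
  | appL : ∀ {s S t}, RStep s S → RStep (app s t) {u | ∃ s' ∈ S, u = app s' t}
  | appR : ∀ {s t T}, RStep t T → RStep (app s t) {u | ∃ t' ∈ T, u = app s t'}
  | lam : ∀ {x t T}, RStep t T → RStep (lam x t) {u | ∃ t' ∈ T, u = lam x t'}
  | bagHead : ∀ {v V ts}, RStep v V →
      RStep (bag (v :: ts)) {u | ∃ v' ∈ V, u = bag (v' :: ts)}
  | bagTail : ∀ {v ts T}, RStep (bag ts) T →
      RStep (bag (v :: ts)) {u | ∃ ts', bag ts' ∈ T ∧ u = bag (v :: ts')}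

/-- The resource reduction →_r lifted to sets of resource terms:
`{e} ∪ E₂ →_r E₁ ∪ E₂` whenever `e →_r E₁` and `e ∉ E₂`. -/
inductive RSetStep : Set RTm → Set RTm → Prop
  | mk : ∀ {e E₁ E₂}, RStep e E₁ → e ∉ E₂ → RSetStep (insert e E₂) (E₁ ∪ E₂)

/-- A set of resource terms is →_r-normal when no set-level step applies. -/
def RSetNormal (S : Set RTm) : Prop := ∀ S', ¬ RSetStep S S'

/-- `NF(E) = ⋃_{e ∈ E} nf_r(e)` : the set of resource terms occurring in the
(unique, by confluence and strong normalization) →_r-normal form of some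
element of `E`. -/
def NF (E : Set RTm) : Set RTm :=
  {t | ∃ e ∈ E, ∃ S, Relation.ReflTransGen RSetStep {e} S ∧ RSetNormal S ∧ t ∈ S}

/-- `HasBRS t` : `t` contains a β_r-, σ₁- or σ₃-redex (0-redexes not counted). -/
inductive HasBRS : RTm → Prop
  | beta : ∀ {x t vs}, (∀ v ∈ vs, IsRVal v) →
      HasBRS (app (bag [lam x t]) (bag vs))
  | sigma1 : ∀ {x t s₁ s₂}, ¬ RFV x s₁ → HasBRS (app (app (bag [lam x t]) s₁) s₂)
  | sigma3 : ∀ {v x t s}, IsRVal v → ¬ RFV x v →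
      HasBRS (app (bag [v]) (app (bag [lam x t]) s))
  | appL : ∀ {s t}, HasBRS s → HasBRS (app s t)
  | appR : ∀ {s t}, HasBRS t → HasBRS (app s t)
  | lam : ∀ {x t}, HasBRS t → HasBRS (lam x t)
  | bag : ∀ {t ts}, t ∈ ts → HasBRS t → HasBRS (bag ts)

mutual
  /-- The height of a resource term. -/
  def height : RTm → ℕ
    | var _ => 0
    | lam _ t => height t + 1
    | app s t => max (height s) (height t) + 1
    | bag ts => heightList ts + 1
  def heightList : List RTm → ℕ
    | [] => 0
    | t :: ts => max (height t) (heightList ts)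
end

/-- The height of a set of resource terms (possibly infinite). -/
noncomputable def hSet (E : Set RTm) : ℕ∞ := ⨆ t ∈ E, (height t : ℕ∞)

/-- The coherence relation ¨ on resource terms. -/
inductive Coh : RTm → RTm → Prop
  | var : ∀ x, Coh (var x) (var x)
  | lam : ∀ {x s t}, Coh s t → Coh (lam x s) (lam x t)
  | bag : ∀ {us vs}, (∀ a ∈ us ++ vs, ∀ b ∈ us ++ vs, Coh a b) →
      Coh (bag us) (bag vs)
  | app : ∀ {s₁ s₂ t₁ t₂}, Coh s₁ s₂ → Coh t₁ t₂ → Coh (app s₁ t₁) (app s₂ t₂)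

/-- A clique: a set of pairwise coherent resource terms. -/
def Clique (E : Set RTm) : Prop := ∀ s ∈ E, ∀ t ∈ E, Coh s t

/-- A maximal clique: no resource term can be added keeping it a clique. -/
def MaxClique (E : Set RTm) : Prop :=
  Clique E ∧ ∀ e : RTm, Clique (insert e E) → e ∈ E

end RTm
/-- The Taylor expansion: `InT M t` iff the simple term `t` belongs to 𝒯(M). -/
inductive InT : Tm → RTm → Prop
  | var : ∀ x n, InT (.var x) (.bag (List.replicate n (.var x)))
  | lam : ∀ {x N} (ts : List RTm), (∀ t ∈ ts, InT N t) →
      InT (.lam x N) (.bag (ts.map (RTm.lam x)))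
  | app : ∀ {P Q s t}, InT P s → InT Q t → InT (.app P Q) (.app s t)

/-- The Taylor expansion 𝒯(M) of a λ-term, as a set of resource terms. -/
def Taylor (M : Tm) : Set RTm := {t | InT M t}

/-- The normalized Taylor expansion of an approximant: `InTn A t` iff
`t ∈ 𝒯ⁿᶠ(A)`, following the grammar of approximants. -/
inductive InTn : Tm → RTm → Prop
  | var : ∀ x n, InTn (.var x) (.bag (List.replicate n (.var x)))
  | bot : InTn .bot (.bag [])
  | lam : ∀ {x A} (ts : List RTm), (∀ t ∈ ts, InTn A t) →
      InTn (.lam x A) (.bag (ts.map (RTm.lam x)))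
  | spineHead : ∀ {x B t}, InTn B t →
      InTn (.app (.var x) B) (.app (.bag [.var x]) t)
  | spineApp : ∀ {S A s t}, Tm.IsBSpine S → InTn S s → InTn A t →
      InTn (.app S A) (.app s t)
  | redex : ∀ {x A Q s t}, InTn A s → Tm.IsBSpine Q → InTn Q t →
      InTn (.app (.lam x A) Q) (.app (.bag [.lam x s]) t)

/-- The normalized Taylor expansion 𝒯ⁿᶠ(A) of an approximant. -/
def TaylorN (A : Tm) : Set RTm := {t | InTn A t}

section Aux

open RTm

/-- Inversion for `InT` on variables. -/
lemma inT_var_inv {y : ℕ} {e : RTm} (h : InT (.var y) e) :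
    ∃ n, e = .bag (List.replicate n (.var y)) := by
  cases h; exact ⟨_, rfl⟩

/-- Inversion for `InT` on abstractions. -/
lemma inT_lam_inv {y : ℕ} {N : Tm} {e : RTm} (h : InT (.lam y N) e) :
    ∃ ts : List RTm, e = .bag (ts.map (RTm.lam y)) ∧ ∀ s ∈ ts, InT N s := by
  cases h with
  | lam ts hts => exact ⟨ts, rfl, hts⟩

/-- Inversion for `InT` on applications. -/
lemma inT_app_inv {P Q : Tm} {e : RTm} (h : InT (.app P Q) e) :
    ∃ s t, e = .app s t ∧ InT P s ∧ InT Q t := by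
  cases h with
  | app hs ht => exact ⟨_, _, rfl, hs, ht⟩

/-- Every element of 𝒯(V) for a value V is a bag of "single" elements of 𝒯(V). -/
lemma inT_val_bag {V : Tm} (hVal : V.IsVal) {e : RTm} (h : InT V e) :
    ∃ vs, e = .bag vs ∧ ∀ v ∈ vs, InT V (.bag [v]) := by
  cases V with
  | var y =>
    obtain ⟨n, rfl⟩ := inT_var_inv h
    refine ⟨_, rfl, fun v hv => ?_⟩
    rw [List.eq_of_mem_replicate hv]
    exact InT.var y 1
  | lam y N =>
    obtain ⟨ts, rfl, hts⟩ := inT_lam_inv h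
    refine ⟨_, rfl, fun v hv => ?_⟩
    obtain ⟨s, hs, rfl⟩ := List.mem_map.mp hv
    exact InT.lam [s] (by simpa using hts s hs)
  | app _ _ => exact absurd hVal (by simp [Tm.IsVal])
  | bot => cases h

/-- A bag of "single" elements of 𝒯(V) is in 𝒯(V), for V a ⊥-free value. -/
lemma inT_val_bag_of_forall {V : Tm} (hVal : V.IsVal) (hV : V.NoBot)
    {vs : List RTm} (h : ∀ v ∈ vs, InT V (.bag [v])) : InT V (.bag vs) := by
  cases V with
  | var y =>
    have hvy : ∀ v ∈ vs, v = RTm.var y := by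
      intro v hv
      obtain ⟨n, hn⟩ := inT_var_inv (h v hv)
      have : [v] = List.replicate n (.var y) := by injection hn
      match n, this with
      | 1, h' => exact (List.cons.injEq .. ▸ h').1
    have : vs = List.replicate vs.length (.var y) := List.eq_replicate_of_mem hvy
    rw [this]; exact InT.var y vs.length
  | lam y N =>
    induction vs with
    | nil => exact InT.lam [] (by simp)
    | cons v vs ih =>
      obtain ⟨ts, hts, hall⟩ := inT_lam_inv (h v (List.mem_cons_self))
      have hts' : [v] = ts.map (RTm.lam y) := by injection hts
      match ts, hts' with
      | [s], h' =>
        have hv : v = RTm.lam y s := by simpa using h'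
        have hInN : InT N s := hall s (List.mem_singleton_self s)
        obtain ⟨ts₀, hts₀, hall₀⟩ :=
          inT_lam_inv (ih (fun u hu => h u (List.mem_cons_of_mem _ hu)))
        have : vs = ts₀.map (RTm.lam y) := by injection hts₀
        subst this; subst hv
        exact InT.lam (s :: ts₀) (by
          intro u hu
          rcases List.mem_cons.mp hu with rfl | hu
          · exact hInN
          · exact hall₀ u hu)
  | app _ _ => exact absurd hVal (by simp [Tm.IsVal])
  | bot => exact absurd hV (by simp [Tm.NoBot])

/-- Linear substitution with no free occurrence: nothing happens. -/
lemma lsubst_of_not_rfv {e : RTm} {x : ℕ} {vs : List RTm} {e' : RTm}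
    (h : LSubst e x vs e') (hfv : ¬ RFV x e) : vs = [] ∧ e' = e := by
  induction h with
  | varEq x v => exact absurd (RFV.var x) hfv
  | varNe h => exact ⟨rfl, rfl⟩
  | lamEq => exact ⟨rfl, rfl⟩
  | lamNe hne _ ih =>
    obtain ⟨rfl, rfl⟩ := ih (fun hf => hfv (RFV.lam (Ne.symm hne) hf))
    exact ⟨rfl, rfl⟩
  | app _ _ hperm ihs iht =>
    obtain ⟨rfl, rfl⟩ := ihs fun hf => hfv (RFV.appL hf)
    obtain ⟨rfl, rfl⟩ := iht fun hf => hfv (RFV.appR hf)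
    exact ⟨hperm.eq_nil, rfl⟩
  | bagNil => exact ⟨rfl, rfl⟩
  | bagCons _ _ hperm ihv ihts =>
    obtain ⟨rfl, rfl⟩ := ihv fun hf =>
      hfv (RFV.bag (List.mem_cons_self) hf)
    obtain ⟨rfl, hts⟩ := ihts (by
      intro hf
      cases hf with
      | bag hmem hft => exact hfv (RFV.bag (List.mem_cons_of_mem _ hmem) hft))
    have : _ = _ := hts
    injection this with h'
    exact ⟨hperm.eq_nil, by rw [h']⟩

lemma not_rfv_replicate {x y : ℕ} (hxy : y ≠ x) (n : ℕ) :
    ¬ RFV x (.bag (List.replicate n (.var y))) := by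
  intro hf
  cases hf with
  | bag hmem hft =>
    rw [List.eq_of_mem_replicate hmem] at hft
    cases hft
    exact hxy rfl

lemma not_rfv_maplam {x : ℕ} (ts : List RTm) :
    ¬ RFV x (.bag (ts.map (RTm.lam x))) := by
  intro hf
  cases hf with
  | bag hmem hft =>
    obtain ⟨s, _, rfl⟩ := List.mem_map.mp hmem
    cases hft with
    | lam hne _ => exact hne rfl

lemma lsubst_nil_replicate {x y : ℕ} (hxy : y ≠ x) :
    ∀ n, LSubst (.bag (List.replicate n (.var y))) x []
      (.bag (List.replicate n (.var y)))
  | 0 => LSubst.bagNil x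
  | n + 1 =>
    LSubst.bagCons (LSubst.varNe hxy) (lsubst_nil_replicate hxy n)
      (List.Perm.refl _)

lemma lsubst_nil_maplam {x : ℕ} :
    ∀ ts : List RTm,
      LSubst (.bag (ts.map (RTm.lam x))) x [] (.bag (ts.map (RTm.lam x)))
  | [] => LSubst.bagNil x
  | t :: ts =>
    LSubst.bagCons (LSubst.lamEq x t) (lsubst_nil_maplam ts) (List.Perm.refl _)

lemma lsubst_replicate_full (x : ℕ) :
    ∀ vs : List RTm,
      LSubst (.bag (List.replicate vs.length (.var x))) x vs (.bag vs)
  | [] => LSubst.bagNil x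
  | v :: vs =>
    LSubst.bagCons (LSubst.varEq x v) (lsubst_replicate_full x vs)
      (List.Perm.refl _)

lemma lsubst_replicate_inv {x : ℕ} :
    ∀ {n : ℕ} {vs : List RTm} {e : RTm},
      LSubst (.bag (List.replicate n (.var x))) x vs e →
      ∃ vs', e = .bag vs' ∧ vs.Perm vs' := by
  intro n
  induction n with
  | zero =>
    intro vs e h
    rw [List.replicate_zero] at h
    cases h
    exact ⟨[], rfl, List.Perm.refl _⟩
  | succ n ih =>
    intro vs e h
    rw [List.replicate_succ] at h
    cases h with
    | bagCons hv hts hperm =>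
      obtain ⟨vs'', heq, hperm'⟩ := ih hts
      have hts'' : _ = _ := heq
      injection hts'' with h'
      subst h'
      cases hv with
      | varEq =>
        exact ⟨_, rfl, hperm.trans ((List.Perm.refl _).cons _ |>.trans
          (hperm'.cons _))⟩
      | varNe hne => exact absurd rfl hne

lemma lsubst_maplam_inv {x y : ℕ} (hxy : y ≠ x) (Q P : RTm → Prop) :
    ∀ ts : List RTm,
      (∀ s ∈ ts, ∀ ws t', (∀ v ∈ ws, Q v) → LSubst s x ws t' → P t') →
      ∀ vs e, (∀ v ∈ vs, Q v) → LSubst (.bag (ts.map (RTm.lam y))) x vs e →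
        ∃ ts' : List RTm, e = .bag (ts'.map (RTm.lam y)) ∧ ∀ u ∈ ts', P u := by
  intro ts
  induction ts with
  | nil =>
    intro _ vs e _ h
    cases h
    exact ⟨[], rfl, by simp⟩
  | cons s ts ih =>
    intro hP vs e hQ h
    rw [List.map_cons] at h
    cases h with
    | bagCons hv hts hperm =>
      cases hv with
      | lamEq => exact absurd rfl hxy
      | @lamNe _ _ _ _ s' hne hs =>
        obtain ⟨ts', heq, hts'⟩ :=
          ih (fun s' hs' => hP s' (List.mem_cons_of_mem _ hs')) _ _
            (fun v hv => hQ v (hperm.mem_iff.mpr (List.mem_append_right _ hv)))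
            hts
        injection heq with h'
        refine ⟨s' :: ts', by rw [List.map_cons, h'], ?_⟩
        intro u hu
        rcases List.mem_cons.mp hu with rfl | hu
        · exact hP s (List.mem_cons_self) _ _
            (fun v hv => hQ v (hperm.mem_iff.mpr (List.mem_append_left _ hv)))
            hs
        · exact hts' u hu

lemma lsubst_maplam_build {x y : ℕ} (hxy : y ≠ x) (Q P : RTm → Prop) :
    ∀ ts' : List RTm,
      (∀ u ∈ ts', ∃ s ws, P s ∧ (∀ v ∈ ws, Q v) ∧ LSubst s x ws u) →
      ∃ (ts : List RTm) (ws : List RTm), (∀ s ∈ ts, P s) ∧ (∀ v ∈ ws, Q v) ∧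
        LSubst (.bag (ts.map (RTm.lam y))) x ws (.bag (ts'.map (RTm.lam y))) := by
  intro ts'
  induction ts' with
  | nil => exact fun _ => ⟨[], [], by simp, by simp, LSubst.bagNil x⟩
  | cons u ts' ih =>
    intro h
    obtain ⟨s, ws, hPs, hQs, hsub⟩ := h u (List.mem_cons_self)
    obtain ⟨ts, ws', hP, hQ, hsub'⟩ := ih fun u hu => h u (List.mem_cons_of_mem _ hu)
    refine ⟨s :: ts, ws ++ ws', ?_, ?_, ?_⟩
    · intro a ha; rcases List.mem_cons.mp ha with rfl | ha
      exacts [hPs, hP a ha]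
    · intro v hv; rcases List.mem_append.mp hv with hv | hv
      exacts [hQs v hv, hQ v hv]
    · rw [List.map_cons, List.map_cons]
      exact LSubst.bagCons (LSubst.lamNe hxy hsub) hsub' (List.Perm.refl _)

/-- Backward direction of the Substitution Lemma. -/
lemma taylor_subst_bw {V : Tm} (x : ℕ) (hV : V.NoBot) (hVal : V.IsVal) :
    ∀ {M t}, InT M t → ∀ {vs t'}, InT V (.bag vs) → LSubst t x vs t' →
      InT (M.subst x V) t' := by
  intro M t ht
  induction ht with
  | var y n =>
    intro vs t' hvs hl
    by_cases hyx : x = y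
    · subst hyx
      obtain ⟨vs', rfl, hperm⟩ := lsubst_replicate_inv hl
      have : Tm.subst (.var x) x V = V := by simp [Tm.subst]
      rw [this]
      obtain ⟨vs₀, heq, hall⟩ := inT_val_bag hVal hvs
      have : vs = vs₀ := by injection heq
      subst this
      exact inT_val_bag_of_forall hVal hV
        (fun v hv => hall v (hperm.mem_iff.mpr hv))
    · have hyx' : y ≠ x := Ne.symm hyx
      obtain ⟨rfl, rfl⟩ := lsubst_of_not_rfv hl (not_rfv_replicate hyx' n)
      have : Tm.subst (.var y) x V = .var y := by simp [Tm.subst, hyx']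
      rw [this]
      exact InT.var y n
  | @lam y N ts hts ih =>
    intro vs t' hvs hl
    by_cases hyx : x = y
    · subst hyx
      obtain ⟨rfl, rfl⟩ := lsubst_of_not_rfv hl (not_rfv_maplam ts)
      have : Tm.subst (.lam x N) x V = .lam x N := by simp [Tm.subst]
      rw [this]
      exact InT.lam ts hts
    · have hyx' : y ≠ x := Ne.symm hyx
      obtain ⟨vs₀, heq, hall⟩ := inT_val_bag hVal hvs
      have : vs = vs₀ := by injection heq
      subst this
      obtain ⟨ts', rfl, hP⟩ := lsubst_maplam_inv hyx' (fun v => InT V (.bag [v]))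
        (fun u => InT (N.subst x V) u) ts
        (fun s hs ws u hws hlu =>
          ih s hs (inT_val_bag_of_forall hVal hV hws) hlu) vs t' hall hl
      have : Tm.subst (.lam y N) x V = .lam y (N.subst x V) := by
        simp [Tm.subst, hyx']
      rw [this]
      exact InT.lam ts' hP
  | app hP hQ ihP ihQ =>
    intro vs t' hvs hl
    cases hl with
    | app hs ht hperm =>
      obtain ⟨vs₀, heq, hall⟩ := inT_val_bag hVal hvs
      have : vs = vs₀ := by injection heq
      subst this
      exact InT.app
        (ihP (inT_val_bag_of_forall hVal hV
          (fun v hv => hall v (hperm.mem_iff.mpr (List.mem_append_left _ hv)))) hs)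
        (ihQ (inT_val_bag_of_forall hVal hV
          (fun v hv => hall v (hperm.mem_iff.mpr (List.mem_append_right _ hv)))) ht)

/-- Forward direction of the Substitution Lemma. -/
lemma taylor_subst_fw {V : Tm} (x : ℕ) (hV : V.NoBot) (hVal : V.IsVal) :
    ∀ (M : Tm) {t' : RTm}, InT (M.subst x V) t' →
      ∃ t, InT M t ∧ ∃ vs, InT V (.bag vs) ∧ LSubst t x vs t' := by
  intro M
  induction M with
  | var y =>
    intro t' h
    by_cases hyx : x = y
    · subst hyx
      rw [show Tm.subst (.var x) x V = V by simp [Tm.subst]] at h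
      obtain ⟨vs, rfl, _⟩ := inT_val_bag hVal h
      exact ⟨_, InT.var x vs.length, vs, h, lsubst_replicate_full x vs⟩
    · have hyx' : y ≠ x := Ne.symm hyx
      rw [show Tm.subst (.var y) x V = .var y by simp [Tm.subst, hyx']] at h
      obtain ⟨n, rfl⟩ := inT_var_inv h
      exact ⟨_, h, [], inT_val_bag_of_forall hVal hV (by simp),
        lsubst_nil_replicate hyx' n⟩
  | lam y N ihN =>
    intro t' h
    by_cases hyx : x = y
    · subst hyx
      rw [show Tm.subst (.lam x N) x V = .lam x N by simp [Tm.subst]] at h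
      obtain ⟨ts, rfl, _⟩ := inT_lam_inv h
      exact ⟨_, h, [], inT_val_bag_of_forall hVal hV (by simp),
        lsubst_nil_maplam ts⟩
    · have hyx' : y ≠ x := Ne.symm hyx
      rw [show Tm.subst (.lam y N) x V = .lam y (N.subst x V) by
        simp [Tm.subst, hyx']] at h
      obtain ⟨ts', rfl, hts'⟩ := inT_lam_inv h
      obtain ⟨ts, ws, hP, hQ, hsub⟩ := lsubst_maplam_build hyx'
        (fun v => InT V (.bag [v])) (fun s => InT N s) ts'
        (fun u hu => by
          obtain ⟨t, ht, vs, hvs, hl⟩ := ihN (hts' u hu)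
          obtain ⟨vs₀, heq, hall⟩ := inT_val_bag hVal hvs
          have : vs = vs₀ := by injection heq
          subst this
          exact ⟨t, vs, ht, hall, hl⟩)
      exact ⟨_, InT.lam ts hP, ws, inT_val_bag_of_forall hVal hV hQ, hsub⟩
  | app P Q ihP ihQ =>
    intro t' h
    obtain ⟨s', u', rfl, hs', hu'⟩ := inT_app_inv h
    obtain ⟨s, hs, us, hus, hls⟩ := ihP hs'
    obtain ⟨u, hu, ws, hws, hlu⟩ := ihQ hu'
    obtain ⟨us₀, hequ, hallu⟩ := inT_val_bag hVal hus
    have : us = us₀ := by injection hequ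
    subst this
    obtain ⟨ws₀, heqw, hallw⟩ := inT_val_bag hVal hws
    have : ws = ws₀ := by injection heqw
    subst this
    refine ⟨.app s u, InT.app hs hu, us ++ ws, ?_,
      LSubst.app hls hlu (List.Perm.refl _)⟩
    exact inT_val_bag_of_forall hVal hV (by
      intro v hv
      rcases List.mem_append.mp hv with hv | hv
      exacts [hallu v hv, hallw v hv])
  | bot =>
    intro t' h
    rw [show Tm.subst .bot x V = .bot from rfl] at h
    cases h

end Aux

/-- Substitution Lemma: `𝒯(M[x := V])` is the union over
`t ∈ 𝒯(M)` and `[v₁,…,v_n] ∈ 𝒯(V)` of the linear substitutions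
`t⟨x := v₁,…,v_n⟩`. -/
theorem taylor_subst (M V : Tm) (x : ℕ)
    (hM : M.NoBot) (hV : V.NoBot) (hVal : V.IsVal) :
    Taylor (M.subst x V) =
      {t' | ∃ t, InT M t ∧
        ∃ vs : List RTm, InT V (.bag vs) ∧ RTm.LSubst t x vs t'} := by
  ext t'
  simp only [Taylor, Set.mem_setOf_eq]
  constructor
  · exact taylor_subst_fw x hV hVal M
  · rintro ⟨t, ht, vs, hvs, hl⟩
    exact taylor_subst_bw x hV hVal ht hvs hl
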